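/- Let a, b, u₀, k be positive real numbers with a/u₀ = b/k, and for x ∈ (−u₀, k) set F(x) = a·ln(u₀/(u₀ + x)) + b·ln(k/(k − x)) and N(x) = 6F(x)F''(x)² − 3F'(x)²F''(x) − 2F(x)F'(x)F'''(x). Then N(x) → +∞ as x → −u₀ from the right, and N(x) → +∞ as x → k from the left. -/

import Mathlib

open Filter Set Real Topology

/-- The potential of the oscillating heat pipe model,
`F(x) = a·ln(u₀/(u₀ + x)) + b·ln(k/(k − x))`. -/
noncomputable def Fohp (a b u₀ k : ℝ) : ℝ → ℝ := fun x =>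
  a * Real.log (u₀ / (u₀ + x)) + b * Real.log (k / (k - x))

/-- Chicone's function `N(x)` built from the potential `F`. -/
noncomputable def Nfun (F : ℝ → ℝ) (x : ℝ) : ℝ :=
  6 * F x * (deriv (deriv F) x) ^ 2 - 3 * (deriv F x) ^ 2 * deriv (deriv F) x
    - 2 * F x * deriv F x * deriv (deriv (deriv F)) x

private lemma Fohp_derivs (a b u₀ k : ℝ) (hu₀ : 0 < u₀) (hk : 0 < k) :
    ∀ x ∈ Set.Ioo (-u₀) k,
      deriv (Fohp a b u₀ k) x = b * (k - x)⁻¹ - a * (u₀ + x)⁻¹ ∧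
      deriv (deriv (Fohp a b u₀ k)) x = b * (k - x)⁻¹ ^ 2 + a * (u₀ + x)⁻¹ ^ 2 ∧
      deriv (deriv (deriv (Fohp a b u₀ k))) x
        = 2 * b * (k - x)⁻¹ ^ 3 - 2 * a * (u₀ + x)⁻¹ ^ 3 := by
  -- basic HasDerivAt facts on the interval
  have hO : IsOpen (Set.Ioo (-u₀) k) := isOpen_Ioo
  have hspos : ∀ x ∈ Set.Ioo (-u₀) k, 0 < u₀ + x := fun x hx => by
    have := hx.1; linarith
  have hrpos : ∀ x ∈ Set.Ioo (-u₀) k, 0 < k - x := fun x hx => by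
    have := hx.2; linarith
  have hd1 : ∀ x ∈ Set.Ioo (-u₀) k,
      HasDerivAt (fun y => a * Real.log u₀ - a * Real.log (u₀ + y)
        + (b * Real.log k - b * Real.log (k - y)))
        (b * (k - x)⁻¹ - a * (u₀ + x)⁻¹) x := by
    intro x hx
    have h1 : HasDerivAt (fun y : ℝ => u₀ + y) 1 x := (hasDerivAt_id x).const_add u₀
    have h2 : HasDerivAt (fun y : ℝ => k - y) (-1) x := (hasDerivAt_id x).const_sub k
    have hl1 := h1.log (hspos x hx).ne'
    have hl2 := h2.log (hrpos x hx).ne'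
    have := ((hl1.const_mul a).const_sub (a * Real.log u₀)).add
      ((hl2.const_mul b).const_sub (b * Real.log k))
    exact this.congr_deriv (by ring)
  have hd2 : ∀ x ∈ Set.Ioo (-u₀) k,
      HasDerivAt (fun y => b * (k - y)⁻¹ - a * (u₀ + y)⁻¹)
        (b * (k - x)⁻¹ ^ 2 + a * (u₀ + x)⁻¹ ^ 2) x := by
    intro x hx
    have h1 : HasDerivAt (fun y : ℝ => u₀ + y) 1 x := (hasDerivAt_id x).const_add u₀
    have h2 : HasDerivAt (fun y : ℝ => k - y) (-1) x := (hasDerivAt_id x).const_sub k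
    have hi1 := h1.inv (hspos x hx).ne'
    have hi2 := h2.inv (hrpos x hx).ne'
    have := (hi2.const_mul b).sub (hi1.const_mul a)
    exact this.congr_deriv (by simp only [div_eq_mul_inv, ← inv_pow]; ring)
  have hd3 : ∀ x ∈ Set.Ioo (-u₀) k,
      HasDerivAt (fun y => b * (k - y)⁻¹ ^ 2 + a * (u₀ + y)⁻¹ ^ 2)
        (2 * b * (k - x)⁻¹ ^ 3 - 2 * a * (u₀ + x)⁻¹ ^ 3) x := by
    intro x hx
    have h1 : HasDerivAt (fun y : ℝ => u₀ + y) 1 x := (hasDerivAt_id x).const_add u₀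
    have h2 : HasDerivAt (fun y : ℝ => k - y) (-1) x := (hasDerivAt_id x).const_sub k
    have hi1 := h1.inv (hspos x hx).ne'
    have hi2 := h2.inv (hrpos x hx).ne'
    have hp1 := hi1.pow 2
    have hp2 := hi2.pow 2
    have := (hp2.const_mul b).add (hp1.const_mul a)
    have hs := (hspos x hx).ne'
    have hr := (hrpos x hx).ne'
    exact this.congr_deriv (by simp only [Pi.inv_apply, div_eq_mul_inv, ← inv_pow]; ring)
  -- first derivative
  have hF1 : ∀ x ∈ Set.Ioo (-u₀) k,
      deriv (Fohp a b u₀ k) x = b * (k - x)⁻¹ - a * (u₀ + x)⁻¹ := by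
    intro x hx
    have heq : Fohp a b u₀ k =ᶠ[nhds x]
        (fun y => a * Real.log u₀ - a * Real.log (u₀ + y)
          + (b * Real.log k - b * Real.log (k - y))) := by
      filter_upwards [hO.mem_nhds hx] with y hy
      unfold Fohp
      rw [Real.log_div hu₀.ne' (hspos y hy).ne', Real.log_div hk.ne' (hrpos y hy).ne']
      ring
    rw [heq.deriv_eq, (hd1 x hx).deriv]
  have hF2 : ∀ x ∈ Set.Ioo (-u₀) k,
      deriv (deriv (Fohp a b u₀ k)) x = b * (k - x)⁻¹ ^ 2 + a * (u₀ + x)⁻¹ ^ 2 := by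
    intro x hx
    have heq : deriv (Fohp a b u₀ k) =ᶠ[nhds x]
        (fun y => b * (k - y)⁻¹ - a * (u₀ + y)⁻¹) := by
      filter_upwards [hO.mem_nhds hx] with y hy
      exact hF1 y hy
    rw [heq.deriv_eq, (hd2 x hx).deriv]
  have hF3 : ∀ x ∈ Set.Ioo (-u₀) k,
      deriv (deriv (deriv (Fohp a b u₀ k))) x
        = 2 * b * (k - x)⁻¹ ^ 3 - 2 * a * (u₀ + x)⁻¹ ^ 3 := by
    intro x hx
    have heq : deriv (deriv (Fohp a b u₀ k)) =ᶠ[nhds x]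
        (fun y => b * (k - y)⁻¹ ^ 2 + a * (u₀ + y)⁻¹ ^ 2) := by
      filter_upwards [hO.mem_nhds hx] with y hy
      exact hF2 y hy
    rw [heq.deriv_eq, (hd3 x hx).deriv]
  exact fun x hx => ⟨hF1 x hx, hF2 x hx, hF3 x hx⟩

/-- Abstract limit lemma: if `F → +∞`, `s → 0⁺` and the scaled derivatives
`G₁ s, G₂ s², G₃ s³` converge with `6 c₂² - 2 c₁ c₃ > 0`, then Chicone's
combination tends to `+∞`. -/
private lemma key_lim {c1 c2 c3 : ℝ} {l : Filter ℝ} {F G1 G2 G3 s : ℝ → ℝ}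
    (hF : Tendsto F l atTop)
    (hs : Tendsto s l (nhdsWithin 0 (Set.Ioi 0)))
    (h1 : Tendsto (fun x => G1 x * s x) l (nhds c1))
    (h2 : Tendsto (fun x => G2 x * s x ^ 2) l (nhds c2))
    (h3 : Tendsto (fun x => G3 x * s x ^ 3) l (nhds c3))
    (hpos : 0 < 6 * c2 ^ 2 - 2 * (c1 * c3)) :
    Tendsto (fun x => 6 * F x * G2 x ^ 2 - 3 * G1 x ^ 2 * G2 x - 2 * F x * G1 x * G3 x)
      l atTop := by
  have hspos : ∀ᶠ x in l, 0 < s x := hs self_mem_nhdsWithin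
  have hcoef : Tendsto (fun x => 6 * (G2 x * s x ^ 2) ^ 2
      - 2 * ((G1 x * s x) * (G3 x * s x ^ 3))) l (nhds (6 * c2 ^ 2 - 2 * (c1 * c3))) :=
    ((h2.pow 2).const_mul 6).sub ((h1.mul h3).const_mul 2)
  have hB : Tendsto (fun x => (-3) * ((G1 x * s x) ^ 2 * (G2 x * s x ^ 2))) l
      (nhds ((-3) * (c1 ^ 2 * c2))) := ((h1.pow 2).mul h2).const_mul (-3)
  have hH : Tendsto (fun x => F x * (6 * (G2 x * s x ^ 2) ^ 2
      - 2 * ((G1 x * s x) * (G3 x * s x ^ 3)))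
      + (-3) * ((G1 x * s x) ^ 2 * (G2 x * s x ^ 2))) l atTop :=
    (hF.atTop_mul_pos hpos hcoef).atTop_add hB
  have hinv : Tendsto (fun x => (s x)⁻¹) l atTop := tendsto_inv_nhdsGT_zero.comp hs
  have hpow : Tendsto (fun x => (s x)⁻¹ ^ 4) l atTop :=
    (tendsto_pow_atTop (by norm_num : (4:ℕ) ≠ 0)).comp hinv
  have hmul := hH.atTop_mul_atTop₀ hpow
  refine hmul.congr' ?_
  filter_upwards [hspos] with x hx
  have hsne : s x ≠ 0 := hx.ne'
  field_simp
  ring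

set_option maxHeartbeats 1000000 in
theorem stmt19 (a b u₀ k : ℝ) (ha : 0 < a) (hb : 0 < b) (hu₀ : 0 < u₀) (hk : 0 < k)
    (hcenter : a / u₀ = b / k) :
    Filter.Tendsto (Nfun (Fohp a b u₀ k)) (nhdsWithin (-u₀) (Set.Ioi (-u₀))) Filter.atTop ∧
    Filter.Tendsto (Nfun (Fohp a b u₀ k)) (nhdsWithin k (Set.Iio k)) Filter.atTop := by
  have huk : -u₀ < k := by linarith
  have hD := Fohp_derivs a b u₀ k hu₀ hk
  set G1 : ℝ → ℝ := fun x => b * (k - x)⁻¹ - a * (u₀ + x)⁻¹ with hG1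
  set G2 : ℝ → ℝ := fun x => b * (k - x)⁻¹ ^ 2 + a * (u₀ + x)⁻¹ ^ 2 with hG2
  set G3 : ℝ → ℝ := fun x => 2 * b * (k - x)⁻¹ ^ 3 - 2 * a * (u₀ + x)⁻¹ ^ 3 with hG3
  have hNeq : ∀ x ∈ Set.Ioo (-u₀) k, Nfun (Fohp a b u₀ k) x
      = 6 * Fohp a b u₀ k x * G2 x ^ 2 - 3 * G1 x ^ 2 * G2 x
        - 2 * Fohp a b u₀ k x * G1 x * G3 x := by
    intro x hx
    obtain ⟨e1, e2, e3⟩ := hD x hx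
    unfold Nfun
    rw [e1, e2, e3]
  constructor
  · -- left endpoint x → -u₀⁺
    set l := nhdsWithin (-u₀) (Set.Ioi (-u₀)) with hl
    have hmem : Set.Ioo (-u₀) k ∈ l := Ioo_mem_nhdsGT huk
    have hs : Tendsto (fun x => u₀ + x) l (nhdsWithin 0 (Set.Ioi 0)) := by
      apply tendsto_nhdsWithin_of_tendsto_nhds_of_eventually_within
      · have : Tendsto (fun x : ℝ => u₀ + x) (nhds (-u₀)) (nhds (u₀ + -u₀)) :=
          (continuous_const.add continuous_id).tendsto _
        simpa using this.mono_left nhdsWithin_le_nhds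
      · filter_upwards [self_mem_nhdsWithin] with x hx
        simp only [Set.mem_Ioi] at hx ⊢
        linarith
    have hF : Tendsto (Fohp a b u₀ k) l atTop := by
      have hlog : Tendsto (fun x => Real.log (u₀ + x)) l atBot :=
        Real.tendsto_log_nhdsGT_zero.comp hs
      have hneg : Tendsto (fun x => -Real.log (u₀ + x)) l atTop :=
        tendsto_neg_atBot_atTop.comp hlog
      have h1 : Tendsto (fun x => a * Real.log u₀ + a * (-Real.log (u₀ + x))) l atTop :=
        tendsto_atTop_add_const_left _ _ (hneg.const_mul_atTop ha)
      have h1' : Tendsto (fun x => a * Real.log (u₀ / (u₀ + x))) l atTop := by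
        refine h1.congr' ?_
        filter_upwards [hmem] with x hx
        have hsx : (0:ℝ) < u₀ + x := by have := hx.1; linarith
        rw [Real.log_div hu₀.ne' hsx.ne']
        ring
      have h2 : Tendsto (fun x => b * Real.log (k / (k - x))) l
          (nhds (b * Real.log (k / (k - -u₀)))) := by
        have hc : ContinuousAt (fun x => b * Real.log (k / (k - x))) (-u₀) := by
          have hne0 : k - -u₀ ≠ 0 := by linarith
          have hne : k / (k - -u₀) ≠ 0 := by
            have : (0:ℝ) < k - -u₀ := by linarith
            positivity
          exact continuousAt_const.mul ((continuousAt_const.div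
            (continuousAt_const.sub continuousAt_id) hne0).log hne)
        exact hc.tendsto.mono_left nhdsWithin_le_nhds
      exact h1'.atTop_add h2
    have h1 : Tendsto (fun x => G1 x * (u₀ + x)) l (nhds (-a)) := by
      have hc : ContinuousAt (fun x => b * (u₀ + x) * (k - x)⁻¹ - a) (-u₀) := by
        have : (k - -u₀) ≠ 0 := by linarith
        fun_prop (disch := assumption)
      have ht := hc.tendsto.mono_left (nhdsWithin_le_nhds (s := Set.Ioi (-u₀)))
      have hval : b * (u₀ + -u₀) * (k - -u₀)⁻¹ - a = -a := by ring_nf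
      rw [hval] at ht
      refine ht.congr' ?_
      filter_upwards [hmem] with x hx
      have hsx : u₀ + x ≠ 0 := by have := hx.1; intro h; linarith
      have hrx : k - x ≠ 0 := by have := hx.2; intro h; linarith
      simp only [hG1]
      field_simp
    have h2 : Tendsto (fun x => G2 x * (u₀ + x) ^ 2) l (nhds a) := by
      have hc : ContinuousAt (fun x => b * (u₀ + x) ^ 2 * ((k - x)⁻¹) ^ 2 + a) (-u₀) := by
        have : (k - -u₀) ≠ 0 := by linarith
        fun_prop (disch := assumption)
      have ht := hc.tendsto.mono_left (nhdsWithin_le_nhds (s := Set.Ioi (-u₀)))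
      have hval : b * (u₀ + -u₀) ^ 2 * ((k - -u₀)⁻¹) ^ 2 + a = a := by ring_nf
      rw [hval] at ht
      refine ht.congr' ?_
      filter_upwards [hmem] with x hx
      have hsx : u₀ + x ≠ 0 := by have := hx.1; intro h; linarith
      have hrx : k - x ≠ 0 := by have := hx.2; intro h; linarith
      simp only [hG2]
      field_simp
    have h3 : Tendsto (fun x => G3 x * (u₀ + x) ^ 3) l (nhds (-(2*a))) := by
      have hc : ContinuousAt (fun x => 2 * b * (u₀ + x) ^ 3 * ((k - x)⁻¹) ^ 3 - 2 * a)
          (-u₀) := by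
        have : (k - -u₀) ≠ 0 := by linarith
        fun_prop (disch := assumption)
      have ht := hc.tendsto.mono_left (nhdsWithin_le_nhds (s := Set.Ioi (-u₀)))
      have hval : 2 * b * (u₀ + -u₀) ^ 3 * ((k - -u₀)⁻¹) ^ 3 - 2 * a = -(2*a) := by ring_nf
      rw [hval] at ht
      refine ht.congr' ?_
      filter_upwards [hmem] with x hx
      have hsx : u₀ + x ≠ 0 := by have := hx.1; intro h; linarith
      have hrx : k - x ≠ 0 := by have := hx.2; intro h; linarith
      simp only [hG3]
      field_simp
    have hpos : 0 < 6 * a ^ 2 - 2 * ((-a) * (-(2*a))) := by nlinarith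
    have := key_lim hF hs h1 h2 h3 hpos
    refine this.congr' ?_
    filter_upwards [hmem] with x hx
    exact (hNeq x hx).symm
  · -- right endpoint x → k⁻
    set l := nhdsWithin k (Set.Iio k) with hl
    have hmem : Set.Ioo (-u₀) k ∈ l := Ioo_mem_nhdsLT huk
    have hs : Tendsto (fun x => k - x) l (nhdsWithin 0 (Set.Ioi 0)) := by
      apply tendsto_nhdsWithin_of_tendsto_nhds_of_eventually_within
      · have : Tendsto (fun x : ℝ => k - x) (nhds k) (nhds (k - k)) :=
          (continuous_const.sub continuous_id).tendsto _
        simpa using this.mono_left nhdsWithin_le_nhds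
      · filter_upwards [self_mem_nhdsWithin] with x hx
        simp only [Set.mem_Iio] at hx
        simp only [Set.mem_Ioi]
        linarith
    have hF : Tendsto (Fohp a b u₀ k) l atTop := by
      have hlog : Tendsto (fun x => Real.log (k - x)) l atBot :=
        Real.tendsto_log_nhdsGT_zero.comp hs
      have hneg : Tendsto (fun x => -Real.log (k - x)) l atTop :=
        tendsto_neg_atBot_atTop.comp hlog
      have h1 : Tendsto (fun x => b * Real.log k + b * (-Real.log (k - x))) l atTop :=
        tendsto_atTop_add_const_left _ _ (hneg.const_mul_atTop hb)
      have h1' : Tendsto (fun x => b * Real.log (k / (k - x))) l atTop := by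
        refine h1.congr' ?_
        filter_upwards [hmem] with x hx
        have hrx : (0:ℝ) < k - x := by have := hx.2; linarith
        rw [Real.log_div hk.ne' hrx.ne']
        ring
      have h2 : Tendsto (fun x => a * Real.log (u₀ / (u₀ + x))) l
          (nhds (a * Real.log (u₀ / (u₀ + k)))) := by
        have hc : ContinuousAt (fun x => a * Real.log (u₀ / (u₀ + x))) k := by
          have hne0 : u₀ + k ≠ 0 := by linarith
          have hne : u₀ / (u₀ + k) ≠ 0 := by
            have : (0:ℝ) < u₀ + k := by linarith
            positivity
          exact continuousAt_const.mul ((continuousAt_const.div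
            (continuousAt_const.add continuousAt_id) hne0).log hne)
        exact hc.tendsto.mono_left nhdsWithin_le_nhds
      have := h1'.atTop_add h2
      refine this.congr ?_
      intro x
      unfold Fohp
      ring
    have h1 : Tendsto (fun x => G1 x * (k - x)) l (nhds b) := by
      have hc : ContinuousAt (fun x => b - a * (k - x) * ((u₀ + x)⁻¹)) k := by
        have : (u₀ + k) ≠ 0 := by linarith
        fun_prop (disch := assumption)
      have ht := hc.tendsto.mono_left (nhdsWithin_le_nhds (s := Set.Iio k))
      have hval : b - a * (k - k) * ((u₀ + k)⁻¹) = b := by ring_nf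
      rw [hval] at ht
      refine ht.congr' ?_
      filter_upwards [hmem] with x hx
      have hsx : u₀ + x ≠ 0 := by have := hx.1; intro h; linarith
      have hrx : k - x ≠ 0 := by have := hx.2; intro h; linarith
      simp only [hG1]
      field_simp
    have h2 : Tendsto (fun x => G2 x * (k - x) ^ 2) l (nhds b) := by
      have hc : ContinuousAt (fun x => b + a * (k - x) ^ 2 * ((u₀ + x)⁻¹) ^ 2) k := by
        have : (u₀ + k) ≠ 0 := by linarith
        fun_prop (disch := assumption)
      have ht := hc.tendsto.mono_left (nhdsWithin_le_nhds (s := Set.Iio k))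
      have hval : b + a * (k - k) ^ 2 * ((u₀ + k)⁻¹) ^ 2 = b := by ring_nf
      rw [hval] at ht
      refine ht.congr' ?_
      filter_upwards [hmem] with x hx
      have hsx : u₀ + x ≠ 0 := by have := hx.1; intro h; linarith
      have hrx : k - x ≠ 0 := by have := hx.2; intro h; linarith
      simp only [hG2]
      field_simp
    have h3 : Tendsto (fun x => G3 x * (k - x) ^ 3) l (nhds (2*b)) := by
      have hc : ContinuousAt (fun x => 2 * b - 2 * a * (k - x) ^ 3 * ((u₀ + x)⁻¹) ^ 3) k := by
        have : (u₀ + k) ≠ 0 := by linarith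
        fun_prop (disch := assumption)
      have ht := hc.tendsto.mono_left (nhdsWithin_le_nhds (s := Set.Iio k))
      have hval : 2 * b - 2 * a * (k - k) ^ 3 * ((u₀ + k)⁻¹) ^ 3 = 2*b := by ring_nf
      rw [hval] at ht
      refine ht.congr' ?_
      filter_upwards [hmem] with x hx
      have hsx : u₀ + x ≠ 0 := by have := hx.1; intro h; linarith
      have hrx : k - x ≠ 0 := by have := hx.2; intro h; linarith
      simp only [hG3]
      field_simp
    have hpos : 0 < 6 * b ^ 2 - 2 * (b * (2*b)) := by nlinarith
    have := key_lim hF hs h1 h2 h3 hpos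
    refine this.congr' ?_
    filter_upwards [hmem] with x hx
    exact (hNeq x hx).symm
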